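/- Let (X^ε, Ω, P^ε) be a clustering process on a finite connected graph with n ≥ 1 particles. Then the family is OM-reversible: the function ν(x) = |s(x)| − 1 satisfies the order-of-magnitude detailed balance condition ν(x) + φ(P(x,y)) = ν(y) + φ(P(y,x)) for all x, y with P(x,y) > 0. Moreover, if for each ε > 0, π^ε is a stationary distribution for P^ε such that for each x ∈ Ω the function ε ↦ π^ε(x) is Θ(ε^k) for some integer k = φ(π(x)), then φ(π(x)) = |s(x)| − 1 for every x ∈ Ω. -/

import Mathlib

open Finset

/-- `f` is `Θ(ε^k)` as `ε → 0⁺`: there are positive constants `M₁, M₂, ε̄` with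
`M₁ ε^k ≤ f ε ≤ M₂ ε^k` for all `0 < ε < ε̄`. -/
def IsTheta (f : ℝ → ℝ) (k : ℤ) : Prop :=
  ∃ M₁ M₂ εbar : ℝ, 0 < M₁ ∧ 0 < M₂ ∧ 0 < εbar ∧
    ∀ ε : ℝ, 0 < ε → ε < εbar → M₁ * ε ^ k ≤ f ε ∧ f ε ≤ M₂ * ε ^ k

/-- `P(u,v) > 0` in the order-of-magnitude sense: `ε ↦ P^ε(u,v)` is `Θ(ε^k)`
for some integer `k`. -/
def EPos {Ω : Type*} (P : ℝ → Ω → Ω → ℝ) (u v : Ω) : Prop :=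
  ∃ k : ℤ, IsTheta (fun ε => P ε u v) k

/-- Configurations of `n` particles on the vertex set `V`. -/
abbrev Config (V : Type) [Fintype V] (n : ℕ) := {x : V → ℕ // ∑ v, x v = n}

noncomputable instance Config.fintype {V : Type} [Fintype V] [DecidableEq V] {n : ℕ} :
    Fintype (Config V n) :=
  Fintype.ofInjective
    (fun x : Config V n => fun v : V =>
      (⟨x.val v, Nat.lt_succ_of_le ((Finset.single_le_sum
        (f := x.val) (fun i _ => Nat.zero_le _) (Finset.mem_univ v)).trans
        (le_of_eq x.2))⟩ : Fin (n + 1)))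
    (fun a b h => Subtype.ext (funext fun v => congrArg Fin.val (congrFun h v)))

/-- The configuration `x^{i,j}` obtained from `x` by moving one particle from vertex `i`
to vertex `j` (with `x^{i,i} = x`). -/
def move {V : Type} [DecidableEq V] (x : V → ℕ) (i j : V) : V → ℕ :=
  if i = j then x else Function.update (Function.update x i (x i - 1)) j (x j + 1)

/-- The support of a configuration: the set of occupied vertices. -/
def supp {V : Type} [Fintype V] [DecidableEq V] (x : V → ℕ) : Finset V :=
  Finset.univ.filter fun v => x v ≠ 0

def EvZero (f : ℝ → ℝ) : Prop := ∃ εbar : ℝ, 0 < εbar ∧ ∀ ε : ℝ, 0 < ε → ε < εbar → f ε = 0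

lemma isTheta_congr {f g : ℝ → ℝ} {k : ℤ} (h : ∀ ε : ℝ, 0 < ε → f ε = g ε)
    (hf : IsTheta f k) : IsTheta g k := by
  obtain ⟨M₁, M₂, e, h1, h2, h3, h4⟩ := hf
  exact ⟨M₁, M₂, e, h1, h2, h3, fun ε hε hε' => (h ε hε) ▸ h4 ε hε hε'⟩

lemma isTheta_not_lt {f : ℝ → ℝ} {k l : ℤ} (hk : IsTheta f k) (hl : IsTheta f l) :
    ¬ k < l := by
  intro hkl
  obtain ⟨M₁, M₂, e₁, hM₁, hM₂, he₁, hb₁⟩ := hk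
  obtain ⟨N₁, N₂, e₂, hN₁, hN₂, he₂, hb₂⟩ := hl
  set ε := min (min e₁ e₂) (min 1 (M₁ / N₂)) / 2 with hεdef
  have hMN : 0 < M₁ / N₂ := div_pos hM₁ hN₂
  have hεpos : 0 < ε := by positivity
  have hεlt : ε < min (min e₁ e₂) (min 1 (M₁ / N₂)) := by
    have : 0 < min (min e₁ e₂) (min 1 (M₁ / N₂)) := by positivity
    linarith
  have hε1 : ε < e₁ := lt_of_lt_of_le hεlt (le_trans (min_le_left _ _) (min_le_left _ _))
  have hε2 : ε < e₂ := lt_of_lt_of_le hεlt (le_trans (min_le_left _ _) (min_le_right _ _))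
  have hεone : ε < 1 := lt_of_lt_of_le hεlt (le_trans (min_le_right _ _) (min_le_left _ _))
  have hεMN : ε < M₁ / N₂ := lt_of_lt_of_le hεlt (le_trans (min_le_right _ _) (min_le_right _ _))
  have h1 := (hb₁ ε hεpos hε1).1
  have h2 := (hb₂ ε hεpos hε2).2
  -- f ε ≤ N₂ ε^l, M₁ ε^k ≤ f ε
  have hεk : (0:ℝ) < ε ^ k := zpow_pos hεpos k
  have hzl : ε ^ l = ε ^ (l - k) * ε ^ k := by
    rw [← zpow_add₀ (ne_of_gt hεpos)]; ring_nf
  have hlk : ε ^ (l - k) ≤ ε := by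
    calc ε ^ (l - k) ≤ ε ^ (1:ℤ) :=
          zpow_le_zpow_right_of_le_one₀ hεpos (le_of_lt hεone) (by omega)
      _ = ε := zpow_one ε
  have key : M₁ * ε ^ k ≤ N₂ * ε ^ (l - k) * ε ^ k := by
    rw [mul_assoc, ← hzl]; linarith
  have key2 : M₁ ≤ N₂ * ε ^ (l - k) := le_of_mul_le_mul_right (by linarith [key]) hεk
  have : M₁ ≤ N₂ * ε := le_trans key2 (by nlinarith)
  have : N₂ * ε < M₁ := by
    have := (lt_div_iff₀ hN₂).mp hεMN
    linarith
  linarith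

lemma isTheta_unique {f : ℝ → ℝ} {k l : ℤ} (hk : IsTheta f k) (hl : IsTheta f l) : k = l :=
  le_antisymm (not_lt.mp (isTheta_not_lt hl hk)) (not_lt.mp (isTheta_not_lt hk hl))

lemma isTheta_one : IsTheta (fun _ => (1:ℝ)) 0 :=
  ⟨1, 1, 1, one_pos, one_pos, one_pos, fun ε hε _ => by simp⟩

lemma isTheta_mul {f g : ℝ → ℝ} {k l : ℤ} (hf : IsTheta f k) (hg : IsTheta g l) :
    IsTheta (fun ε => f ε * g ε) (k + l) := by
  obtain ⟨M₁, M₂, e₁, hM₁, hM₂, he₁, hb₁⟩ := hf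
  obtain ⟨N₁, N₂, e₂, hN₁, hN₂, he₂, hb₂⟩ := hg
  refine ⟨M₁ * N₁, M₂ * N₂, min e₁ e₂, by positivity, by positivity, by positivity,
    fun ε hε hε' => ?_⟩
  have h1 := hb₁ ε hε (lt_of_lt_of_le hε' (min_le_left _ _))
  have h2 := hb₂ ε hε (lt_of_lt_of_le hε' (min_le_right _ _))
  have hεk : (0:ℝ) < ε ^ k := zpow_pos hε k
  have hεl : (0:ℝ) < ε ^ l := zpow_pos hε l
  have hfpos : 0 < f ε := lt_of_lt_of_le (by positivity) h1.1
  have hgpos : 0 < g ε := lt_of_lt_of_le (by positivity) h2.1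
  constructor
  · calc M₁ * N₁ * ε ^ (k + l) = (M₁ * ε ^ k) * (N₁ * ε ^ l) := by
          rw [zpow_add₀ (ne_of_gt hε)]; ring
      _ ≤ f ε * g ε := mul_le_mul h1.1 h2.1 (by positivity) (le_of_lt hfpos)
  · calc f ε * g ε ≤ (M₂ * ε ^ k) * (N₂ * ε ^ l) :=
          mul_le_mul h1.2 h2.2 (le_of_lt hgpos) (by positivity)
      _ = M₂ * N₂ * ε ^ (k + l) := by rw [zpow_add₀ (ne_of_gt hε)]; ring

lemma isTheta_add_isTheta {f g : ℝ → ℝ} {k l : ℤ} (hf : IsTheta f k) (hg : IsTheta g l) :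
    IsTheta (fun ε => f ε + g ε) (min k l) := by
  obtain ⟨M₁, M₂, e₁, hM₁, hM₂, he₁, hb₁⟩ := hf
  obtain ⟨N₁, N₂, e₂, hN₁, hN₂, he₂, hb₂⟩ := hg
  refine ⟨min M₁ N₁, M₂ + N₂, min (min e₁ e₂) 1, by positivity, by positivity, by positivity,
    fun ε hε hε' => ?_⟩
  have h1 := hb₁ ε hε (lt_of_lt_of_le hε' ((min_le_left _ _).trans (min_le_left _ _)))
  have h2 := hb₂ ε hε (lt_of_lt_of_le hε' ((min_le_left _ _).trans (min_le_right _ _)))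
  have hεone : ε ≤ 1 := le_of_lt (lt_of_lt_of_le hε' (min_le_right _ _))
  have hk : ε ^ k ≤ ε ^ (min k l) :=
    zpow_le_zpow_right_of_le_one₀ hε hεone (min_le_left _ _)
  have hl : ε ^ l ≤ ε ^ (min k l) :=
    zpow_le_zpow_right_of_le_one₀ hε hεone (min_le_right _ _)
  have hεk : (0:ℝ) < ε ^ k := zpow_pos hε k
  have hεl : (0:ℝ) < ε ^ l := zpow_pos hε l
  show min M₁ N₁ * ε ^ (min k l) ≤ f ε + g ε ∧ f ε + g ε ≤ (M₂ + N₂) * ε ^ (min k l)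
  constructor
  · rcases min_cases k l with ⟨hmin, _⟩ | ⟨hmin, _⟩
    · rw [hmin]
      have hg0 : 0 < g ε := lt_of_lt_of_le (by positivity) h2.1
      have : min M₁ N₁ * ε ^ k ≤ M₁ * ε ^ k :=
        mul_le_mul_of_nonneg_right (min_le_left _ _) (le_of_lt hεk)
      linarith [h1.1]
    · rw [hmin]
      have hf0 : 0 < f ε := lt_of_lt_of_le (by positivity) h1.1
      have : min M₁ N₁ * ε ^ l ≤ N₁ * ε ^ l :=
        mul_le_mul_of_nonneg_right (min_le_right _ _) (le_of_lt hεl)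
      linarith [h2.1]
  · calc f ε + g ε ≤ M₂ * ε ^ k + N₂ * ε ^ l := by linarith [h1.2, h2.2]
      _ ≤ M₂ * ε ^ (min k l) + N₂ * ε ^ (min k l) := by
          have := mul_le_mul_of_nonneg_left hk (le_of_lt hM₂)
          have := mul_le_mul_of_nonneg_left hl (le_of_lt hN₂)
          linarith
      _ = (M₂ + N₂) * ε ^ (min k l) := by ring

lemma isTheta_add_evZero {f g : ℝ → ℝ} {k : ℤ} (hf : IsTheta f k) (hg : EvZero g) :
    IsTheta (fun ε => f ε + g ε) k := by
  obtain ⟨M₁, M₂, e₁, hM₁, hM₂, he₁, hb₁⟩ := hf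
  obtain ⟨e₂, he₂, hb₂⟩ := hg
  refine ⟨M₁, M₂, min e₁ e₂, hM₁, hM₂, by positivity, fun ε hε hε' => ?_⟩
  have h1 := hb₁ ε hε (lt_of_lt_of_le hε' (min_le_left _ _))
  have h2 := hb₂ ε hε (lt_of_lt_of_le hε' (min_le_right _ _))
  show M₁ * ε ^ k ≤ f ε + g ε ∧ f ε + g ε ≤ M₂ * ε ^ k
  rw [h2]; simpa using h1

lemma evZero_sum {α : Type*} (s : Finset α) (f : α → ℝ → ℝ)
    (h : ∀ a ∈ s, EvZero (f a)) : EvZero (fun ε => ∑ a ∈ s, f a ε) := by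
  classical
  induction s using Finset.induction with
  | empty => exact ⟨1, one_pos, fun ε _ _ => by simp⟩
  | @insert a s' hnot ih =>
    obtain ⟨e₁, he₁, hb₁⟩ := h a (Finset.mem_insert_self a s')
    obtain ⟨e₂, he₂, hb₂⟩ := ih (fun b hb => h b (Finset.mem_insert_of_mem hb))
    refine ⟨min e₁ e₂, by positivity, fun ε hε hε' => ?_⟩
    show (∑ b ∈ insert a s', f b ε) = 0
    have h2 : (∑ b ∈ s', f b ε) = 0 := hb₂ ε hε (lt_of_lt_of_le hε' (min_le_right _ _))
    rw [Finset.sum_insert hnot, hb₁ ε hε (lt_of_lt_of_le hε' (min_le_left _ _)), h2, add_zero]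

lemma isTheta_finsum {α : Type*} (t : Finset α) (hne : t.Nonempty) (f : α → ℝ → ℝ)
    (k : α → ℤ) (hθ : ∀ a ∈ t, IsTheta (f a) (k a)) :
    IsTheta (fun ε => ∑ a ∈ t, f a ε) (t.inf' hne k) := by
  classical
  revert hθ
  induction hne using Finset.Nonempty.cons_induction with
  | singleton a =>
    intro hθ
    simpa using hθ a (Finset.mem_singleton_self a)
  | cons a s' hnot hs' ih =>
    intro hθ
    rw [Finset.inf'_cons hs']
    have h1 : IsTheta (f a) (k a) := hθ a (Finset.mem_cons_self a s')
    have h2 := ih (fun b hb => hθ b (Finset.mem_cons_of_mem hb))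
    have := isTheta_add_isTheta h1 h2
    exact isTheta_congr (fun ε _ => by rw [Finset.sum_cons]) this

lemma isTheta_sum {α : Type*} [DecidableEq α] (s t : Finset α) (hts : t ⊆ s)
    (hne : t.Nonempty) (f : α → ℝ → ℝ) (k : α → ℤ)
    (hθ : ∀ a ∈ t, IsTheta (f a) (k a))
    (h0 : ∀ a ∈ s, a ∉ t → EvZero (f a)) :
    IsTheta (fun ε => ∑ a ∈ s, f a ε) (t.inf' hne k) := by
  have hsplit : ∀ ε : ℝ, (∑ a ∈ t, f a ε) + (∑ a ∈ s \ t, f a ε) = ∑ a ∈ s, f a ε := by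
    intro ε
    rw [add_comm]
    exact Finset.sum_sdiff hts
  have h1 := isTheta_finsum t hne f k hθ
  have h2 := evZero_sum (s \ t) f (fun a ha => h0 a (Finset.mem_sdiff.mp ha).1
    (Finset.mem_sdiff.mp ha).2)
  exact isTheta_congr (fun ε _ => hsplit ε) (isTheta_add_evZero h1 h2)

section MoveLemmas
variable {V : Type} [DecidableEq V] {x : V → ℕ} {i j v : V}

lemma move_apply_left (hij : i ≠ j) : move x i j i = x i - 1 := by
  simp [move, hij, Function.update, hij.symm]

lemma move_apply_right (hij : i ≠ j) : move x i j j = x j + 1 := by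
  simp [move, hij, Function.update]

lemma move_apply_other (hij : i ≠ j) (hvi : v ≠ i) (hvj : v ≠ j) : move x i j v = x v := by
  simp [move, hij, Function.update, hvi, hvj]

lemma move_move (hij : i ≠ j) (hx : 1 ≤ x i) : move (move x i j) j i = x := by
  funext v
  by_cases hvj : v = j
  · subst hvj
    rw [move_apply_left hij.symm, move_apply_right hij]
    omega
  · by_cases hvi : v = i
    · subst hvi
      rw [move_apply_right hij.symm, move_apply_left hij]
      omega
    · rw [move_apply_other hij.symm hvj hvi, move_apply_other hij hvi hvj]

end MoveLemmas

section SuppLemmas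
variable {V : Type} [Fintype V] [DecidableEq V] {x : V → ℕ} {i j : V}

lemma sum_mul_move (g : V → ℕ) (hij : i ≠ j) (hx : 1 ≤ x i) :
    (∑ v, move x i j v * g v) + g i = (∑ v, x v * g v) + g j := by
  classical
  have hjmem : j ∈ Finset.univ.erase i := Finset.mem_erase.mpr ⟨hij.symm, Finset.mem_univ j⟩
  have split : ∀ y : V → ℕ, (∑ v, y v * g v)
      = y i * g i + (y j * g j + ∑ v ∈ (Finset.univ.erase i).erase j, y v * g v) := by
    intro y
    rw [← Finset.sum_erase_add _ _ (Finset.mem_univ i), ← Finset.sum_erase_add _ _ hjmem]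
    ring
  rw [split (move x i j), split x]
  have hrest : (∑ v ∈ (Finset.univ.erase i).erase j, move x i j v * g v)
      = ∑ v ∈ (Finset.univ.erase i).erase j, x v * g v := by
    apply Finset.sum_congr rfl
    intro v hv
    simp only [Finset.mem_erase] at hv
    rw [move_apply_other hij hv.2.1 hv.1]
  rw [move_apply_left hij, move_apply_right hij, hrest]
  zify [hx]
  ring

lemma sum_move (hij : i ≠ j) (hx : 1 ≤ x i) : (∑ v, move x i j v) = ∑ v, x v := by
  have := sum_mul_move (x := x) (fun _ => 1) hij hx
  simpa using this

lemma card_supp_move (hij : i ≠ j) (hx : 1 ≤ x i) :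
    ((supp (move x i j)).card : ℤ)
      = ((supp x).card : ℤ) + (if x j = 0 then 1 else 0) - (if x i = 1 then 1 else 0) := by
  classical
  have himem : i ∈ supp x := Finset.mem_filter.mpr ⟨Finset.mem_univ i, by omega⟩
  by_cases hxi : x i = 1
  · have hsupp : supp (move x i j) = insert j ((supp x).erase i) := by
      ext v
      simp only [supp, Finset.mem_filter, Finset.mem_univ, true_and, Finset.mem_insert,
        Finset.mem_erase]
      by_cases hvj : v = j
      · subst hvj
        rw [move_apply_right hij]
        simp
      · by_cases hvi : v = i
        · subst hvi
          rw [move_apply_left hij]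
          simp [hxi, Ne.symm, hvj]
        · rw [move_apply_other hij hvi hvj]
          simp [hvj, hvi]
    rw [hsupp, if_pos hxi]
    by_cases hxj : x j = 0
    · have hj : j ∉ (supp x).erase i := by
        simp [supp, Finset.mem_erase, hxj]
      rw [Finset.card_insert_of_notMem hj, Finset.card_erase_of_mem himem, if_pos hxj]
      have : 1 ≤ (supp x).card := Finset.card_pos.mpr ⟨i, himem⟩
      push_cast
      omega
    · have hj : j ∈ (supp x).erase i := by
        simp [supp, Finset.mem_erase, hij.symm, hxj, Ne.symm hij]
      rw [Finset.insert_eq_self.mpr hj, Finset.card_erase_of_mem himem, if_neg hxj]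
      have : 1 ≤ (supp x).card := Finset.card_pos.mpr ⟨i, himem⟩
      push_cast
      omega
  · have hsupp : supp (move x i j) = insert j (supp x) := by
      ext v
      simp only [supp, Finset.mem_filter, Finset.mem_univ, true_and, Finset.mem_insert]
      by_cases hvj : v = j
      · subst hvj
        rw [move_apply_right hij]
        simp
      · by_cases hvi : v = i
        · subst hvi
          rw [move_apply_left hij]
          simp only [hvj, false_or]
          omega
        · rw [move_apply_other hij hvi hvj]
          simp [hvj]
    rw [hsupp, if_neg hxi]
    by_cases hxj : x j = 0
    · have hj : j ∉ supp x := by simp [supp, hxj]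
      rw [Finset.card_insert_of_notMem hj, if_pos hxj]
      push_cast
      omega
    · have hj : j ∈ supp x := by simp [supp, hxj]
      rw [Finset.insert_eq_self.mpr hj, if_neg hxj]
      omega

end SuppLemmas

section Reach
variable {V : Type} [Fintype V] [DecidableEq V] {n : ℕ}

def MoveRel (G : SimpleGraph V) (n : ℕ) (x y : Config V n) : Prop :=
  ∃ i j : V, G.Adj i j ∧ 1 ≤ x.val i ∧ y.val = move x.val i j

lemma moveRel_symm {G : SimpleGraph V} {x y : Config V n} (h : MoveRel G n x y) :
    MoveRel G n y x := by
  obtain ⟨i, j, hadj, hxi, hy⟩ := h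
  have hij : i ≠ j := hadj.ne
  refine ⟨j, i, hadj.symm, ?_, ?_⟩
  · rw [hy, move_apply_right hij]; omega
  · rw [hy]; exact (move_move hij hxi).symm

lemma rtg_crossing {α : Type*} {r : α → α → Prop} {p : α → Prop} {a b : α}
    (hab : Relation.ReflTransGen r a b) (ha : p a) (hb : ¬ p b) :
    ∃ x y, p x ∧ ¬ p y ∧ r x y := by
  revert hb
  induction hab with
  | refl => exact fun hb => absurd ha hb
  | @tail c d h1 h2 ih =>
    intro hd
    by_cases hc : p c
    · exact ⟨c, d, hc, hd, h2⟩
    · exact ih hc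

lemma reach_star {G : SimpleGraph V} (hconn : G.Connected) (v0 : V)
    (xstar : Config V n) (hxstar : ∀ v, v ≠ v0 → xstar.val v = 0)
    (x : Config V n) : Relation.ReflTransGen (MoveRel G n) x xstar := by
  classical
  suffices H : ∀ (N : ℕ) (x : Config V n), (∑ v, x.val v * G.dist v v0) ≤ N →
      Relation.ReflTransGen (MoveRel G n) x xstar by
    exact H _ x le_rfl
  intro N
  induction N with
  | zero =>
    intro x hx
    have hzero : ∀ v, v ≠ v0 → x.val v = 0 := by
      intro v hv
      by_contra hne
      have h1 : 1 ≤ G.dist v v0 := hconn.pos_dist_of_ne hv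
      have h2 : x.val v * G.dist v v0 ≤ ∑ w, x.val w * G.dist w v0 :=
        Finset.single_le_sum (f := fun w => x.val w * G.dist w v0)
          (fun _ _ => Nat.zero_le _) (Finset.mem_univ v)
      have : 1 ≤ x.val v * G.dist v v0 :=
        Nat.one_le_iff_ne_zero.mpr (Nat.mul_ne_zero (by omega) (by omega))
      omega
    have : x = xstar := by
      have hval : ∀ y : Config V n, (∀ v, v ≠ v0 → y.val v = 0) → y.val v0 = n := by
        intro y hy
        have := y.2
        rw [Finset.sum_eq_single v0 (fun b _ hb => hy b hb) (fun h => absurd (Finset.mem_univ v0) h)] at this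
        exact this
      apply Subtype.ext
      funext v
      by_cases hv : v = v0
      · subst hv; rw [hval x hzero, hval xstar hxstar]
      · rw [hzero v hv, hxstar v hv]
    rw [this]
  | succ N ih =>
    intro x hx
    by_cases hex : ∃ v, v ≠ v0 ∧ 1 ≤ x.val v
    · obtain ⟨v, hv0, hxv⟩ := hex
      obtain ⟨p, hp⟩ := hconn.exists_walk_length_eq_dist v v0
      cases p with
      | nil => exact absurd rfl hv0
      | @cons _ u _ hadj q =>
        have hq : G.dist u v0 ≤ q.length := SimpleGraph.dist_le q
        have hlen : q.length + 1 = G.dist v v0 := by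
          simpa [SimpleGraph.Walk.length_cons] using hp
        have hdu : G.dist u v0 < G.dist v v0 := by omega
        have hvu : v ≠ u := hadj.ne
        set y : Config V n := ⟨move x.val v u, by rw [sum_move hvu hxv, x.2]⟩ with hy
        have hR : MoveRel G n x y := ⟨v, u, hadj, hxv, rfl⟩
        have hΦ : (∑ w, y.val w * G.dist w v0) + G.dist v v0
            = (∑ w, x.val w * G.dist w v0) + G.dist u v0 :=
          sum_mul_move (fun w => G.dist w v0) hvu hxv
        have : (∑ w, y.val w * G.dist w v0) ≤ N := by omega
        exact Relation.ReflTransGen.head hR (ih y this)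
    · push_neg at hex
      have hzero : ∀ v, v ≠ v0 → x.val v = 0 := fun v hv => by
        have := hex v hv; omega
      -- same as zero case
      have : x = xstar := by
        have hval : ∀ y : Config V n, (∀ v, v ≠ v0 → y.val v = 0) → y.val v0 = n := by
          intro y hy
          have := y.2
          rw [Finset.sum_eq_single v0 (fun b _ hb => hy b hb) (fun h => absurd (Finset.mem_univ v0) h)] at this
          exact this
        apply Subtype.ext
        funext v
        by_cases hv : v = v0
        · subst hv; rw [hval x hzero, hval xstar hxstar]
        · rw [hzero v hv, hxstar v hv]
      rw [this]

end Reach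


/-- A clustering process is OM-reversible: `ν(x) = |s(x)| − 1` satisfies order-of-magnitude
detailed balance; moreover any stationary distributions `π^ε` with integer orders of
magnitude satisfy `φ(π(x)) = |s(x)| − 1`. -/
theorem clustering_process_OM_reversible_stationary
    {V : Type} [Fintype V] [DecidableEq V]
    (G : SimpleGraph V) (hconn : G.Connected)
    (n : ℕ) (hn : 1 ≤ n)
    (P : ℝ → Config V n → Config V n → ℝ)
    (hstoch : ∀ ε : ℝ, 0 < ε →
      (∀ x y : Config V n, 0 ≤ P ε x y) ∧ ∀ x : Config V n, ∑ y, P ε x y = 1)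
    (hmoves : ∀ x y : Config V n, EPos P x y →
      y = x ∨ ∃ i j : V, G.Adj i j ∧ 1 ≤ x.val i ∧ y.val = move x.val i j)
    (hzero : ∀ x y : Config V n, ¬ EPos P x y →
      ∃ εbar > (0 : ℝ), ∀ ε : ℝ, 0 < ε → ε < εbar → P ε x y = 0)
    (hsym : ∀ x y : Config V n, EPos P x y ↔ EPos P y x)
    (hrate : ∀ (x y : Config V n) (i j : V), (G.Adj i j ∨ j = i) → 1 ≤ x.val i →
      y.val = move x.val i j →
      IsTheta (fun ε => P ε x y) (if x.val j = 0 then 1 else 0))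
    (φP : Config V n → Config V n → ℤ)
    (hφP : ∀ x y : Config V n, EPos P x y → IsTheta (fun ε => P ε x y) (φP x y)) :
    (∀ x y : Config V n, EPos P x y →
      (((supp x.val).card : ℤ) - 1) + φP x y = (((supp y.val).card : ℤ) - 1) + φP y x) ∧
    (∀ (π : ℝ → Config V n → ℝ) (φπ : Config V n → ℤ),
      (∀ ε : ℝ, 0 < ε → (∀ z : Config V n, 0 ≤ π ε z) ∧ (∑ z, π ε z) = 1 ∧
        ∀ y : Config V n, (∑ x, π ε x * P ε x y) = π ε y) →
      (∀ z : Config V n, IsTheta (fun ε => π ε z) (φπ z)) →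
      ∀ z : Config V n, φπ z = ((supp z.val).card : ℤ) - 1) := by
  classical
  have part1 : ∀ x y : Config V n, EPos P x y →
      (((supp x.val).card : ℤ) - 1) + φP x y = (((supp y.val).card : ℤ) - 1) + φP y x := by
    intro x y hxy
    rcases hmoves x y hxy with rfl | ⟨i, j, hadj, hxi, hy⟩
    · ring
    · have hij : i ≠ j := hadj.ne
      have hyx : EPos P y x := (hsym x y).mp hxy
      have hφxy : φP x y = if x.val j = 0 then 1 else 0 :=
        isTheta_unique (hφP x y hxy) (hrate x y i j (Or.inl hadj) hxi hy)
      have hyj : 1 ≤ y.val j := by rw [hy, move_apply_right hij]; omega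
      have hxval : x.val = move y.val j i := by rw [hy]; exact (move_move hij hxi).symm
      have hφyx : φP y x = if y.val i = 0 then 1 else 0 :=
        isTheta_unique (hφP y x hyx) (hrate y x j i (Or.inl hadj.symm) hyj hxval)
      have hcard : ((supp y.val).card : ℤ)
          = ((supp x.val).card : ℤ) + (if x.val j = 0 then 1 else 0)
            - (if x.val i = 1 then 1 else 0) := by
        rw [hy]; exact card_supp_move hij hxi
      have hyi : y.val i = x.val i - 1 := by rw [hy, move_apply_left hij]
      rw [hφxy, hφyx, hcard, hyi]
      have hiff : (x.val i - 1 = 0) ↔ x.val i = 1 := by omega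
      by_cases h1 : x.val j = 0 <;> by_cases h2 : x.val i = 1 <;>
        simp [h1, h2, hiff] <;> ring
  refine ⟨part1, ?_⟩
  intro π φπ hπ hφπ
  obtain ⟨v0⟩ := hconn.nonempty
  set xstar : Config V n := ⟨fun v => if v = v0 then n else 0, by simp⟩ with hxstardef
  have hstarzero : ∀ v, v ≠ v0 → xstar.val v = 0 := fun v hv => if_neg hv
  set ν : Config V n → ℤ := fun z => ((supp z.val).card : ℤ) - 1 with hνdef
  set h : Config V n → ℤ := fun z => φπ z - ν z with hhdef
  have hsupp_ne : ∀ z : Config V n, (supp z.val).Nonempty := by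
    intro z
    by_contra hne
    rw [Finset.not_nonempty_iff_eq_empty] at hne
    have hall : ∀ v, z.val v = 0 := by
      intro v
      by_contra hv
      have : v ∈ supp z.val := Finset.mem_filter.mpr ⟨Finset.mem_univ v, hv⟩
      rw [hne] at this
      exact absurd this (Finset.notMem_empty v)
    have : (∑ v, z.val v) = 0 := Finset.sum_eq_zero (fun v _ => hall v)
    rw [z.2] at this
    omega
  have hν0 : ∀ z : Config V n, 0 ≤ ν z := by
    intro z
    have : 1 ≤ (supp z.val).card := Finset.card_pos.mpr (hsupp_ne z)
    simp only [hνdef]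
    push_cast
    omega
  have hνstar : ν xstar = 0 := by
    have : supp xstar.val = {v0} := by
      ext v
      simp only [supp, Finset.mem_filter, Finset.mem_univ, true_and, Finset.mem_singleton]
      by_cases hv : v = v0
      · subst hv; simp [hxstardef]; omega
      · simp [hxstardef, hv]
    simp [hνdef, this]
  haveI : Nonempty (Config V n) := ⟨xstar⟩
  have hu : (Finset.univ : Finset (Config V n)).Nonempty := Finset.univ_nonempty
  set c : ℤ := Finset.univ.sup' hu h with hcdef
  have hEPosR : ∀ {x y : Config V n}, MoveRel G n x y → EPos P x y := by
    rintro x y ⟨i, j, hadj, hxi, hy⟩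
    exact ⟨_, hrate x y i j (Or.inl hadj) hxi hy⟩
  have hconst : ∀ z : Config V n, h z = c := by
    by_contra hnc
    push_neg at hnc
    obtain ⟨z0, hz0⟩ := hnc
    obtain ⟨a, _, hac⟩ := Finset.exists_mem_eq_sup' hu h
    set A : Finset (Config V n) := Finset.univ.filter (fun z => h z = c) with hAdef
    set B : Finset (Config V n) := Finset.univ.filter (fun z => ¬ h z = c) with hBdef
    have hsymR : Symmetric (MoveRel G n) := fun _ _ => moveRel_symm
    have h3 : Relation.ReflTransGen (MoveRel G n) a z0 :=
      (reach_star hconn v0 xstar hstarzero a).trans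
        ((@Relation.ReflTransGen.symmetric _ _ ⟨fun _ _ hh => hsymR hh⟩).symm _ _ (reach_star hconn v0 xstar hstarzero z0))
    obtain ⟨xA, yB, hxA, hyB, hR⟩ := rtg_crossing (p := fun z => h z = c) h3 hac.symm hz0
    set T : Finset (Config V n × Config V n) :=
      (A ×ˢ B).filter (fun p => EPos P p.1 p.2) with hTdef
    have hTne : T.Nonempty := by
      refine ⟨(xA, yB), Finset.mem_filter.mpr ⟨Finset.mem_product.mpr ⟨?_, ?_⟩, hEPosR hR⟩⟩
      · exact Finset.mem_filter.mpr ⟨Finset.mem_univ _, hxA⟩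
      · exact Finset.mem_filter.mpr ⟨Finset.mem_univ _, hyB⟩
    have hbal : ∀ ε : ℝ, 0 < ε →
        (∑ p ∈ A ×ˢ B, π ε p.1 * P ε p.1 p.2) = ∑ p ∈ A ×ˢ B, π ε p.2 * P ε p.2 p.1 := by
      intro ε hε
      obtain ⟨hPnn, hrow⟩ := hstoch ε hε
      obtain ⟨hπnn, hπsum, hπstat⟩ := hπ ε hε
      rw [Finset.sum_product, Finset.sum_product]
      have hcompl : ∀ f : Config V n → ℝ, (∑ y ∈ A, f y) + (∑ y ∈ B, f y) = ∑ y, f y := by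
        intro f
        rw [hAdef, hBdef]
        exact Finset.sum_filter_add_sum_filter_not Finset.univ _ f
      have e1 : ∀ x, (∑ y ∈ B, π ε x * P ε x y) = π ε x - ∑ y ∈ A, π ε x * P ε x y := by
        intro x
        have h1 : (∑ y ∈ A, π ε x * P ε x y) + (∑ y ∈ B, π ε x * P ε x y) = π ε x := by
          rw [hcompl, ← Finset.mul_sum, hrow x, mul_one]
        linarith
      have e2 : ∀ x, (∑ y ∈ B, π ε y * P ε y x) = π ε x - ∑ y ∈ A, π ε y * P ε y x := by
        intro x
        have h1 : (∑ y ∈ A, π ε y * P ε y x) + (∑ y ∈ B, π ε y * P ε y x) = π ε x := by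
          rw [hcompl, hπstat x]
        linarith
      have swap : (∑ x ∈ A, ∑ y ∈ A, π ε x * P ε x y)
          = ∑ x ∈ A, ∑ y ∈ A, π ε y * P ε y x := Finset.sum_comm
      calc (∑ x ∈ A, ∑ y ∈ B, π ε x * P ε x y)
          = ∑ x ∈ A, (π ε x - ∑ y ∈ A, π ε x * P ε x y) :=
            Finset.sum_congr rfl (fun x _ => e1 x)
        _ = ∑ x ∈ A, (π ε x - ∑ y ∈ A, π ε y * P ε y x) := by
            rw [Finset.sum_sub_distrib, Finset.sum_sub_distrib, swap]
        _ = ∑ x ∈ A, ∑ y ∈ B, π ε y * P ε y x :=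
            (Finset.sum_congr rfl (fun x _ => (e2 x).symm))
    set k₁ : Config V n × Config V n → ℤ := fun p => φπ p.1 + φP p.1 p.2 with hk₁def
    set k₂ : Config V n × Config V n → ℤ := fun p => φπ p.2 + φP p.2 p.1 with hk₂def
    have hside1 : IsTheta (fun ε => ∑ p ∈ A ×ˢ B, π ε p.1 * P ε p.1 p.2) (T.inf' hTne k₁) := by
      refine isTheta_sum (A ×ˢ B) T (Finset.filter_subset _ _) hTne _ k₁ ?_ ?_
      · intro p hp
        have hE : EPos P p.1 p.2 := (Finset.mem_filter.mp hp).2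
        exact isTheta_mul (hφπ p.1) (hφP p.1 p.2 hE)
      · intro p _ hp
        have hE : ¬ EPos P p.1 p.2 := fun hE => hp (Finset.mem_filter.mpr ⟨by assumption, hE⟩)
        obtain ⟨e, he, hb⟩ := hzero p.1 p.2 hE
        exact ⟨e, he, fun ε hε hε' => by
          show π ε p.1 * P ε p.1 p.2 = 0
          rw [hb ε hε hε', mul_zero]⟩
    have hside2 : IsTheta (fun ε => ∑ p ∈ A ×ˢ B, π ε p.2 * P ε p.2 p.1) (T.inf' hTne k₂) := by
      refine isTheta_sum (A ×ˢ B) T (Finset.filter_subset _ _) hTne _ k₂ ?_ ?_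
      · intro p hp
        have hE : EPos P p.2 p.1 := (hsym p.1 p.2).mp (Finset.mem_filter.mp hp).2
        exact isTheta_mul (hφπ p.2) (hφP p.2 p.1 hE)
      · intro p _ hp
        have hE : ¬ EPos P p.1 p.2 := fun hE => hp (Finset.mem_filter.mpr ⟨by assumption, hE⟩)
        have hE2 : ¬ EPos P p.2 p.1 := fun hE2 => hE ((hsym p.1 p.2).mpr hE2)
        obtain ⟨e, he, hb⟩ := hzero p.2 p.1 hE2
        exact ⟨e, he, fun ε hε hε' => by
          show π ε p.2 * P ε p.2 p.1 = 0
          rw [hb ε hε hε', mul_zero]⟩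
    have hKeq : T.inf' hTne k₁ = T.inf' hTne k₂ :=
      isTheta_unique hside1 (isTheta_congr (fun ε hε => (hbal ε hε).symm) hside2)
    obtain ⟨pm, hpm, hKval⟩ := Finset.exists_mem_eq_inf' hTne k₁
    have hpmAB := Finset.mem_product.mp (Finset.mem_filter.mp hpm).1
    have hpmE : EPos P pm.1 pm.2 := (Finset.mem_filter.mp hpm).2
    have hpm1 : h pm.1 = c := (Finset.mem_filter.mp hpmAB.1).2
    have hpm2 : h pm.2 ≠ c := (Finset.mem_filter.mp hpmAB.2).2
    have hpm2le : h pm.2 ≤ c := by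
      have : h pm.2 ≤ Finset.univ.sup' hu h := Finset.le_sup' h (Finset.mem_univ pm.2)
      omega
    have hdb := part1 pm.1 pm.2 hpmE
    have hk2pm : k₂ pm = k₁ pm + h pm.2 - c := by
      simp only [hk₁def, hk₂def, hhdef, hνdef] at *
      omega
    have hK2le : T.inf' hTne k₂ ≤ k₂ pm := Finset.inf'_le k₂ hpm
    omega
  obtain ⟨z1, _, hz1⟩ := Finset.exists_mem_eq_inf' hu φπ
  have hsumθ : IsTheta (fun ε => ∑ z, π ε z) (Finset.univ.inf' hu φπ) :=
    isTheta_finsum Finset.univ hu (fun z ε => π ε z) φπ (fun z _ => hφπ z)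
  have hone : IsTheta (fun _ : ℝ => (1:ℝ)) (Finset.univ.inf' hu φπ) :=
    isTheta_congr (fun ε hε => (hπ ε hε).2.1) hsumθ
  have hK0 : Finset.univ.inf' hu φπ = 0 := isTheta_unique hone isTheta_one
  have hstarle : Finset.univ.inf' hu φπ ≤ φπ xstar := Finset.inf'_le φπ (Finset.mem_univ xstar)
  have hφstar : φπ xstar = ν xstar + c := by have := hconst xstar; simp only [hhdef] at this; omega
  have hz1eq : φπ z1 = ν z1 + c := by have := hconst z1; simp only [hhdef] at this; omega
  have hc0 : c = 0 := by
    have h1 := hν0 z1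
    rw [hz1eq] at hz1
    rw [hφstar, hνstar] at hstarle
    omega
  intro z
  have := hconst z
  simp only [hhdef, hνdef, hc0] at this ⊢
  omega
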